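/- Let U = S⁴ \ {(0,1)}. The map Φ(w,t,z) = ( (1/√(2(1−t)))·(w·z), √((1−t)/2)·z ) is a homeomorphism from U × S³ (with the subspace and product topologies) onto the subset h⁻¹(U) ∩ S⁷ of ℍ × ℍ (with the subspace topology), and it satisfies h(Φ(w,t,z)) = (w,t) for all (w,t) ∈ U and z ∈ S³. -/

import Mathlib

open scoped Quaternion

/-- The quaternionic Hopf map `h(u,v) = (2·u·conj(v), |u|² − |v|²)`. -/
noncomputable def hopf (p : ℍ[ℝ] × ℍ[ℝ]) : ℍ[ℝ] × ℝ :=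
  (2 * (p.1 * star p.2), ‖p.1‖ ^ 2 - ‖p.2‖ ^ 2)

/-- The unit sphere `S⁷` in `ℍ × ℍ`. -/
def sphere7 : Set (ℍ[ℝ] × ℍ[ℝ]) := {p | ‖p.1‖ ^ 2 + ‖p.2‖ ^ 2 = 1}

/-- The unit sphere `S⁴` in `ℍ × ℝ`. -/
def sphere4 : Set (ℍ[ℝ] × ℝ) := {p | ‖p.1‖ ^ 2 + p.2 ^ 2 = 1}

/-- The unit sphere `S³` in `ℍ`. -/
def sphere3 : Set ℍ[ℝ] := {z | ‖z‖ = 1}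

/-- `U = S⁴ \ {(0,1)}`. -/
def sphere4U : Set (ℍ[ℝ] × ℝ) := sphere4 \ {(0, 1)}

/-- The local trivialization `Φ(w,t,z) = ((1/√(2(1−t)))·(w·z), √((1−t)/2)·z)`. -/
noncomputable def hopfTriv (p : (ℍ[ℝ] × ℝ) × ℍ[ℝ]) : ℍ[ℝ] × ℍ[ℝ] :=
  ((1 / Real.sqrt (2 * (1 - p.1.2))) • (p.1.1 * p.2), Real.sqrt ((1 - p.1.2) / 2) • p.2)

namespace HopfAux

noncomputable def hopfInv (q : ℍ[ℝ] × ℍ[ℝ]) : (ℍ[ℝ] × ℝ) × ℍ[ℝ] :=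
  (hopf q, ‖q.2‖⁻¹ • q.2)

lemma t_lt_one {w : ℍ[ℝ]} {t : ℝ} (h : (w, t) ∈ sphere4U) : t < 1 := by
  obtain ⟨h1, h2⟩ := h
  simp only [sphere4, Set.mem_setOf_eq] at h1
  rcases lt_or_eq_of_le (show t ≤ 1 by nlinarith [sq_nonneg ‖w‖, norm_nonneg w]) with h | h
  · exact h
  · exfalso
    apply h2
    have hw : ‖w‖ = 0 := by nlinarith [norm_nonneg w]
    simp only [Set.mem_singleton_iff, Prod.mk.injEq]
    exact ⟨norm_eq_zero.mp hw, h⟩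

lemma hopf_triv_eq {w z : ℍ[ℝ]} {t : ℝ} (ht : t < 1) (hw : ‖w‖ ^ 2 + t ^ 2 = 1)
    (hz : ‖z‖ = 1) : hopf (hopfTriv ((w, t), z)) = (w, t) := by
  have h1 : (0:ℝ) < 1 - t := by linarith
  have hs : (0:ℝ) < Real.sqrt (1 - t) := Real.sqrt_pos.mpr h1
  have hr2 : (0:ℝ) < Real.sqrt 2 := by positivity
  have h2 : Real.sqrt (2 * (1 - t)) = Real.sqrt 2 * Real.sqrt (1 - t) :=
    Real.sqrt_mul (by norm_num) _
  have h3 : Real.sqrt ((1 - t) / 2) = Real.sqrt (1 - t) / Real.sqrt 2 :=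
    Real.sqrt_div h1.le 2
  have hzz : z * star z = 1 := by
    simp [Quaternion.self_mul_star, Quaternion.normSq_eq_norm_mul_self, hz]
  have key : (1 / Real.sqrt (2 * (1 - t))) * Real.sqrt ((1 - t) / 2) = 1 / 2 := by
    rw [h2, h3]
    have : Real.sqrt 2 * Real.sqrt 2 = 2 := Real.mul_self_sqrt (by norm_num)
    field_simp
    nlinarith
  have ha2 : (1 / Real.sqrt (2 * (1 - t))) ^ 2 = 1 / (2 * (1 - t)) := by
    rw [div_pow, one_pow, Real.sq_sqrt (by linarith)]
  have hb2 : (Real.sqrt ((1 - t) / 2)) ^ 2 = (1 - t) / 2 := Real.sq_sqrt (by linarith)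
  simp only [hopf, hopfTriv]
  refine Prod.ext ?_ ?_
  · show 2 * (_ * star _) = w
    simp only [smul_mul_assoc, mul_smul_comm, smul_smul, Quaternion.star_smul]
    rw [mul_assoc w z (star z), hzz, mul_one]
    have h2w : (2 : ℍ[ℝ]) * w = (2:ℝ) • w := by
      rw [← Quaternion.coe_mul_eq_smul]; norm_cast
    rw [h2w, smul_smul]
    have : Real.sqrt ((1 - t) / 2) * (1 / Real.sqrt (2 * (1 - t))) * 2 = 1 := by
      rw [mul_comm (Real.sqrt ((1 - t) / 2))]; linarith
    rw [this, one_smul]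
  · show ‖_‖ ^ 2 - ‖_‖ ^ 2 = t
    rw [norm_smul, norm_smul, norm_mul, hz, Real.norm_eq_abs, Real.norm_eq_abs,
      abs_of_nonneg (by positivity), abs_of_nonneg (Real.sqrt_nonneg _)]
    have hw2 : ‖w‖ ^ 2 = 1 - t ^ 2 := by linarith
    rw [mul_one, mul_one, mul_pow, ha2, hb2, hw2]
    field_simp
    ring

lemma mem_target {p : (ℍ[ℝ] × ℝ) × ℍ[ℝ]}
    (hp : p ∈ (sphere4U ×ˢ sphere3 : Set ((ℍ[ℝ] × ℝ) × ℍ[ℝ]))) :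
    hopfTriv p ∈ (hopf ⁻¹' sphere4U ∩ sphere7 : Set (ℍ[ℝ] × ℍ[ℝ])) := by
  obtain ⟨⟨w, t⟩, z⟩ := p
  obtain ⟨h1, h2⟩ := hp
  have ht : t < 1 := t_lt_one h1
  have hw : ‖w‖ ^ 2 + t ^ 2 = 1 := h1.1
  have hz : ‖z‖ = 1 := h2
  constructor
  · show hopf (hopfTriv ((w, t), z)) ∈ sphere4U
    rw [hopf_triv_eq ht hw hz]
    exact h1
  · show ‖_‖ ^ 2 + ‖_‖ ^ 2 = 1
    have h1' : (0:ℝ) < 1 - t := by linarith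
    have ha2 : (1 / Real.sqrt (2 * (1 - t))) ^ 2 = 1 / (2 * (1 - t)) := by
      rw [div_pow, one_pow, Real.sq_sqrt (by linarith)]
    have hb2 : (Real.sqrt ((1 - t) / 2)) ^ 2 = (1 - t) / 2 := Real.sq_sqrt (by linarith)
    simp only [hopfTriv]
    rw [norm_smul, norm_smul, norm_mul, hz, Real.norm_eq_abs, Real.norm_eq_abs,
      abs_of_nonneg (by positivity), abs_of_nonneg (Real.sqrt_nonneg _)]
    have hw2 : ‖w‖ ^ 2 = 1 - t ^ 2 := by linarith
    rw [mul_one, mul_one, mul_pow, ha2, hb2, hw2]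
    field_simp
    ring

lemma v_ne_zero {q : ℍ[ℝ] × ℍ[ℝ]}
    (hq : q ∈ (hopf ⁻¹' sphere4U ∩ sphere7 : Set (ℍ[ℝ] × ℍ[ℝ]))) : q.2 ≠ 0 := by
  intro hv
  obtain ⟨h1, h2⟩ := hq
  apply h1.2
  simp only [sphere7, Set.mem_setOf_eq, hv, norm_zero] at h2
  simp only [hopf, hv, star_zero, mul_zero, norm_zero, Set.mem_singleton_iff, Prod.mk.injEq]
  constructor
  · simp
  · simpa using h2

lemma mem_source {q : ℍ[ℝ] × ℍ[ℝ]}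
    (hq : q ∈ (hopf ⁻¹' sphere4U ∩ sphere7 : Set (ℍ[ℝ] × ℍ[ℝ]))) :
    hopfInv q ∈ (sphere4U ×ˢ sphere3 : Set ((ℍ[ℝ] × ℝ) × ℍ[ℝ])) := by
  refine ⟨hq.1, ?_⟩
  have hv := v_ne_zero hq
  show ‖‖q.2‖⁻¹ • q.2‖ = 1
  rw [norm_smul, Real.norm_eq_abs, abs_of_nonneg (by positivity),
    inv_mul_cancel₀ (norm_ne_zero_iff.mpr hv)]

lemma right_inv' {q : ℍ[ℝ] × ℍ[ℝ]}
    (hq : q ∈ (hopf ⁻¹' sphere4U ∩ sphere7 : Set (ℍ[ℝ] × ℍ[ℝ]))) :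
    hopfTriv (hopfInv q) = q := by
  obtain ⟨u, v⟩ := q
  have hv : v ≠ 0 := v_ne_zero hq
  have hvn : (0:ℝ) < ‖v‖ := norm_pos_iff.mpr hv
  have h2 : ‖u‖ ^ 2 + ‖v‖ ^ 2 = 1 := hq.2
  have h1mt : 1 - (‖u‖ ^ 2 - ‖v‖ ^ 2) = 2 * ‖v‖ ^ 2 := by linarith
  have hsq1 : Real.sqrt (2 * (1 - (‖u‖ ^ 2 - ‖v‖ ^ 2))) = 2 * ‖v‖ := by
    rw [h1mt, show (2:ℝ) * (2 * ‖v‖ ^ 2) = (2 * ‖v‖) ^ 2 by ring,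
      Real.sqrt_sq (by positivity)]
  have hsq2 : Real.sqrt ((1 - (‖u‖ ^ 2 - ‖v‖ ^ 2)) / 2) = ‖v‖ := by
    rw [h1mt, show (2:ℝ) * ‖v‖ ^ 2 / 2 = ‖v‖ ^ 2 by ring, Real.sqrt_sq hvn.le]
  have hvv : star v * v = ((‖v‖ * ‖v‖ : ℝ) : ℍ[ℝ]) := by
    rw [Quaternion.star_mul_self, Quaternion.normSq_eq_norm_mul_self]
  simp only [hopfTriv, hopfInv, hopf]
  refine Prod.ext ?_ ?_
  · show (1 / Real.sqrt (2 * (1 - (‖u‖ ^ 2 - ‖v‖ ^ 2)))) •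
      ((2 * (u * star v)) * (‖v‖⁻¹ • v)) = u
    rw [hsq1]
    rw [mul_smul_comm, smul_smul]
    rw [mul_assoc, mul_assoc, hvv, Quaternion.mul_coe_eq_smul, mul_smul_comm, smul_smul]
    have h2u : (2 : ℍ[ℝ]) * u = (2:ℝ) • u := by
      rw [← Quaternion.coe_mul_eq_smul]; norm_cast
    rw [h2u, smul_smul]
    have : 1 / (2 * ‖v‖) * ‖v‖⁻¹ * (‖v‖ * ‖v‖) * 2 = 1 := by field_simp
    rw [this, one_smul]
  · show Real.sqrt ((1 - (‖u‖ ^ 2 - ‖v‖ ^ 2)) / 2) • (‖v‖⁻¹ • v) = v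
    rw [hsq2, smul_smul, mul_inv_cancel₀ (ne_of_gt hvn), one_smul]

lemma left_inv' {p : (ℍ[ℝ] × ℝ) × ℍ[ℝ]}
    (hp : p ∈ (sphere4U ×ˢ sphere3 : Set ((ℍ[ℝ] × ℝ) × ℍ[ℝ]))) :
    hopfInv (hopfTriv p) = p := by
  obtain ⟨⟨w, t⟩, z⟩ := p
  obtain ⟨h1, h2⟩ := hp
  have ht : t < 1 := t_lt_one h1
  have hz : ‖z‖ = 1 := h2
  have hb : (0:ℝ) < Real.sqrt ((1 - t) / 2) := Real.sqrt_pos.mpr (by linarith)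
  refine Prod.ext ?_ ?_
  · exact hopf_triv_eq ht h1.1 hz
  · show ‖(hopfTriv ((w, t), z)).2‖⁻¹ • (hopfTriv ((w, t), z)).2 = z
    simp only [hopfTriv]
    rw [norm_smul, Real.norm_eq_abs, abs_of_nonneg hb.le, hz, mul_one, smul_smul,
      inv_mul_cancel₀ (ne_of_gt hb), one_smul]

lemma contOn_triv : ContinuousOn hopfTriv (sphere4U ×ˢ sphere3) := by
  apply ContinuousOn.prodMk
  · apply ContinuousOn.fun_smul
    · apply ContinuousOn.div continuousOn_const
      · exact (Real.continuous_sqrt.comp (continuous_const.mul (continuous_const.sub continuous_fst.snd))).continuousOn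
      · intro p hp
        have ht : p.1.2 < 1 := t_lt_one (w := p.1.1) (t := p.1.2) hp.1
        exact ne_of_gt (Real.sqrt_pos.mpr (by linarith))
    · exact (continuous_fst.fst.mul continuous_snd).continuousOn
  · exact ((Real.continuous_sqrt.comp ((continuous_const.sub continuous_fst.snd).div_const 2)).smul continuous_snd).continuousOn

lemma contOn_inv : ContinuousOn hopfInv (hopf ⁻¹' sphere4U ∩ sphere7) := by
  apply ContinuousOn.prodMk
  · apply Continuous.continuousOn
    exact (continuous_const.mul (continuous_fst.mul continuous_snd.star)).prodMk
      ((continuous_fst.norm.pow 2).sub (continuous_snd.norm.pow 2))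
  · apply ContinuousOn.fun_smul
    · apply ContinuousOn.fun_inv₀ continuous_snd.norm.continuousOn
      intro q hq
      exact norm_ne_zero_iff.mpr (v_ne_zero hq)
    · exact continuous_snd.continuousOn

noncomputable def theHomeo : (sphere4U ×ˢ sphere3 : Set ((ℍ[ℝ] × ℝ) × ℍ[ℝ])) ≃ₜ
    (hopf ⁻¹' sphere4U ∩ sphere7 : Set (ℍ[ℝ] × ℍ[ℝ])) where
  toFun p := ⟨hopfTriv p, mem_target p.2⟩
  invFun q := ⟨hopfInv q, mem_source q.2⟩
  left_inv p := Subtype.ext (left_inv' p.2)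
  right_inv q := Subtype.ext (right_inv' q.2)
  continuous_toFun := Continuous.subtype_mk contOn_triv.restrict _
  continuous_invFun := Continuous.subtype_mk contOn_inv.restrict _

end HopfAux

/-- Let `U = S⁴ \ {(0,1)}`.  The map `Φ(w,t,z) = ((1/√(2(1−t)))·(w·z), √((1−t)/2)·z)` is a
homeomorphism from `U × S³` onto the subset `h⁻¹(U) ∩ S⁷` of `ℍ × ℍ` (all with the subspace
topologies), and it satisfies `h(Φ(w,t,z)) = (w,t)` for all `(w,t) ∈ U` and `z ∈ S³`. -/
theorem hopf_local_trivialization :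
    (∃ e : (sphere4U ×ˢ sphere3 : Set ((ℍ[ℝ] × ℝ) × ℍ[ℝ])) ≃ₜ
        (hopf ⁻¹' sphere4U ∩ sphere7 : Set (ℍ[ℝ] × ℍ[ℝ])),
      ∀ p : (sphere4U ×ˢ sphere3 : Set ((ℍ[ℝ] × ℝ) × ℍ[ℝ])),
        (e p : ℍ[ℝ] × ℍ[ℝ]) = hopfTriv (p : (ℍ[ℝ] × ℝ) × ℍ[ℝ])) ∧
    ∀ p ∈ (sphere4U ×ˢ sphere3 : Set ((ℍ[ℝ] × ℝ) × ℍ[ℝ])), hopf (hopfTriv p) = p.1 := by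
  refine ⟨⟨HopfAux.theHomeo, fun p => rfl⟩, ?_⟩
  intro p hp
  obtain ⟨⟨w, t⟩, z⟩ := p
  exact HopfAux.hopf_triv_eq (HopfAux.t_lt_one hp.1) hp.1.1 hp.2
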